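/- Let μ be a positive Borel measure on [0,1). Then μ satisfies sup_{w∈𝔻} ∫_0^1 (1-|w|²)/|1 - w̄ t|² dμ(t) < ∞ if and only if sup_{w∈𝔻} |∫_0^1 (1-|w|²)/(1 - w̄ t)² dμ(t)| < ∞; that is, for measures on [0,1) the Carleson-type condition with modulus inside is equivalent to the Hankel-type condition with modulus outside. -/

import Mathlib

open MeasureTheory Complex Metric

private lemma den_lb17 {w : ℂ} (hw : ‖w‖ < 1) {t : ℝ} (ht : t ∈ Set.Ico (0:ℝ) 1) :
    (0:ℝ) < 1 - ‖w‖ * t ∧ 1 - ‖w‖ * t ≤ ‖(1 : ℂ) - (starRingEnd ℂ) w * (t : ℂ)‖ := by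
  obtain ⟨ht0, ht1⟩ := ht
  have hwn : (0:ℝ) ≤ ‖w‖ := norm_nonneg w
  have hwt : ‖w‖ * t < 1 := lt_of_le_of_lt (by nlinarith) ht1
  refine ⟨by linarith, ?_⟩
  have h1 : ‖(starRingEnd ℂ) w * (t : ℂ)‖ = ‖w‖ * t := by
    rw [norm_mul, RCLike.norm_conj, Complex.norm_real, Real.norm_eq_abs,
      _root_.abs_of_nonneg ht0]
  calc 1 - ‖w‖ * t = ‖(1:ℂ)‖ - ‖(starRingEnd ℂ) w * (t:ℂ)‖ := by rw [h1, norm_one]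
    _ ≤ _ := norm_sub_norm_le _ _

/-- For a positive finite Borel measure `μ` on `[0,1)`, the Carleson-type
condition `sup_{w∈𝔻} ∫₀¹ (1-|w|²)/|1-w̄t|² dμ(t) < ∞` (modulus inside) is equivalent to the
Hankel-type condition `sup_{w∈𝔻} |∫₀¹ (1-|w|²)/(1-w̄t)² dμ(t)| < ∞` (modulus outside). -/
theorem statement17 (μ : Measure ℝ) [IsFiniteMeasure μ]
    (hsupp : ∀ᵐ t ∂μ, t ∈ Set.Ico (0 : ℝ) 1) :
    (∃ C : ℝ, ∀ w ∈ Metric.ball (0 : ℂ) 1,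
        (∫ t, (1 - ‖w‖ ^ 2) / ‖1 - (starRingEnd ℂ) w * (t : ℂ)‖ ^ 2 ∂μ) ≤ C)
      ↔ ∃ C : ℝ, ∀ w ∈ Metric.ball (0 : ℂ) 1,
        ‖∫ t, (((1 - ‖w‖ ^ 2 : ℝ) : ℂ) / (1 - (starRingEnd ℂ) w * (t : ℂ)) ^ 2) ∂μ‖ ≤ C := by
  constructor
  · rintro ⟨C, hC⟩
    refine ⟨C, fun w hw => ?_⟩
    have hw1 : ‖w‖ < 1 := by simpa using hw
    have hnum : (0:ℝ) ≤ 1 - ‖w‖ ^ 2 := by nlinarith [norm_nonneg w]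
    calc ‖∫ t, (((1 - ‖w‖ ^ 2 : ℝ) : ℂ) / (1 - (starRingEnd ℂ) w * (t : ℂ)) ^ 2) ∂μ‖
        ≤ ∫ t, ‖(((1 - ‖w‖ ^ 2 : ℝ) : ℂ) / (1 - (starRingEnd ℂ) w * (t : ℂ)) ^ 2)‖ ∂μ :=
          norm_integral_le_integral_norm _
      _ = ∫ t, (1 - ‖w‖ ^ 2) / ‖1 - (starRingEnd ℂ) w * (t : ℂ)‖ ^ 2 ∂μ := by
          refine integral_congr_ae (Filter.Eventually.of_forall fun t => ?_)
          simp only [norm_div, norm_pow, Complex.norm_real, Real.norm_eq_abs,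
            _root_.abs_of_nonneg hnum]
      _ ≤ C := hC w hw
  · rintro ⟨C, hC⟩
    refine ⟨C, fun w hw => ?_⟩
    have hw1 : ‖w‖ < 1 := by simpa using hw
    set r : ℝ := ‖w‖ with hr
    have hr0 : (0:ℝ) ≤ r := norm_nonneg w
    have hr1 : (1:ℝ) - r > 0 := by linarith
    have hnum : (0:ℝ) ≤ 1 - r ^ 2 := by nlinarith
    set v : ℂ := (r : ℂ) with hv
    have hvn : ‖v‖ = r := by
      rw [hv, Complex.norm_real, Real.norm_eq_abs, _root_.abs_of_nonneg hr0]
    have hvb : v ∈ Metric.ball (0:ℂ) 1 := by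
      simp [mem_ball_zero_iff, hvn, hw1]
    -- real comparison function
    set g : ℝ → ℝ := fun t => (1 - r ^ 2) / (1 - r * t) ^ 2 with hg
    set f : ℝ → ℝ := fun t => (1 - r ^ 2) / ‖1 - (starRingEnd ℂ) w * (t : ℂ)‖ ^ 2 with hf
    have hM : ∀ t ∈ Set.Ico (0:ℝ) 1, f t ≤ g t ∧ g t ≤ (1 - r^2)/(1-r)^2 ∧ 0 ≤ f t := by
      intro t ht
      obtain ⟨hd0, hd1⟩ := den_lb17 hw1 ht
      have h1r : 1 - r ≤ 1 - r * t := by nlinarith [ht.1, ht.2]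
      have hsq : (1 - r * t) ^ 2 ≤ ‖1 - (starRingEnd ℂ) w * (t : ℂ)‖ ^ 2 := by nlinarith
      refine ⟨div_le_div_of_nonneg_left ?_ ?_ hsq, ?_, ?_⟩
      · exact hnum
      · positivity
      · apply div_le_div_of_nonneg_left hnum (by positivity) (by nlinarith)
      · apply div_nonneg hnum (by positivity)
    have hfm : AEStronglyMeasurable f μ := by
      apply Measurable.aestronglyMeasurable
      apply Measurable.div measurable_const
      exact ((measurable_const.sub (Complex.measurable_ofReal.const_mul _)).norm.pow
        measurable_const)
    have hgm : AEStronglyMeasurable g μ := by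
      apply Measurable.aestronglyMeasurable
      apply Measurable.div measurable_const
      exact (measurable_const.sub (measurable_id.const_mul _)).pow measurable_const
    have hfi : Integrable f μ := by
      refine (integrable_const ((1 - r^2)/(1-r)^2)).mono' hfm ?_
      filter_upwards [hsupp] with t ht
      have := hM t ht
      rw [Real.norm_eq_abs, _root_.abs_of_nonneg this.2.2]
      linarith [this.1, this.2.1]
    have hgi : Integrable g μ := by
      refine (integrable_const ((1 - r^2)/(1-r)^2)).mono' hgm ?_
      filter_upwards [hsupp] with t ht
      have hg0 : 0 ≤ g t := by
        apply div_nonneg hnum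
        positivity
      rw [Real.norm_eq_abs, _root_.abs_of_nonneg hg0]
      exact (hM t ht).2.1
    have step1 : (∫ t, f t ∂μ) ≤ ∫ t, g t ∂μ := by
      refine integral_mono_ae hfi hgi ?_
      filter_upwards [hsupp] with t ht
      exact (hM t ht).1
    have step2a : ((∫ t, g t ∂μ : ℝ) : ℂ) = ∫ t, ((g t : ℝ) : ℂ) ∂μ := by
      exact (integral_ofReal (𝕜 := ℂ)).symm
    have step2 : ((∫ t, g t ∂μ : ℝ) : ℂ) =
        ∫ t, (((1 - ‖v‖ ^ 2 : ℝ) : ℂ) / (1 - (starRingEnd ℂ) v * (t : ℂ)) ^ 2) ∂μ := by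
      rw [step2a]
      refine integral_congr_ae (Filter.Eventually.of_forall fun t => ?_)
      have hcv : (starRingEnd ℂ) v = v := by simp [hv, Complex.conj_ofReal]
      rw [hcv, hvn, hv]
      push_cast [hg]
      ring
    calc (∫ t, f t ∂μ) ≤ ∫ t, g t ∂μ := step1
      _ ≤ |∫ t, g t ∂μ| := le_abs_self _
      _ = ‖((∫ t, g t ∂μ : ℝ) : ℂ)‖ := by rw [Complex.norm_real, Real.norm_eq_abs]
      _ = ‖∫ t, (((1 - ‖v‖ ^ 2 : ℝ) : ℂ) / (1 - (starRingEnd ℂ) v * (t : ℂ)) ^ 2) ∂μ‖ := by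
          rw [step2]
      _ ≤ C := hC v hvb
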